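/- Let d be a squarefree negative integer with d ≠ -1 and d ≠ -3. If A is an R-matrix over O_{ℚ(√d)} having an off-diagonal entry A_{ij} (i ≠ j) with norm |A_{ij}|² ≥ 5, then M(A) > 1.3 (indeed M(A) ≥ 2.36). -/

import Mathlib

open Polynomial

/-- For squarefree `d < 0`, a generator over `ℤ` of the ring of integers of `ℚ(√d)`,
viewed inside `ℂ`: it is `(1+√d)/2` if `d ≡ 1 (mod 4)` and `√d` otherwise,
where `√d = i·√(-d)`. -/
noncomputable def quadOmega (d : ℤ) : ℂ :=
  if d % 4 = 1 then (1 + Complex.I * Real.sqrt (-d)) / 2 else Complex.I * Real.sqrt (-d)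

/-- Membership in the ring of integers `O_{ℚ(√d)} ⊆ ℂ`. -/
def InIntRing (d : ℤ) (x : ℂ) : Prop :=
  ∃ a b : ℤ, x = (a : ℂ) + (b : ℂ) * quadOmega d

/-- A matrix is cyclotomic if all of its eigenvalues are real and lie in `[-2, 2]`. -/
def IsCycloMat {n : ℕ} (A : Matrix (Fin n) (Fin n) ℂ) : Prop :=
  ∀ μ ∈ spectrum ℂ A, ∃ t : ℝ, μ = (t : ℂ) ∧ -2 ≤ t ∧ t ≤ 2

/-- The Mahler measure of a complex polynomial: the product of `max 1 |α|`
over its roots `α`, with multiplicity. -/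
noncomputable def mahlerMeasurePoly (P : Polynomial ℂ) : ℝ :=
  (P.roots.map fun z => max 1 ‖z‖).prod

/-- The associated reciprocal polynomial `z^n · g(z + 1/z)` of a polynomial `g`
of degree `n`, using `z^n (z+1/z)^k = z^(n-k) (z²+1)^k`. -/
noncomputable def assocRecip (n : ℕ) (g : Polynomial ℂ) : Polynomial ℂ :=
  ∑ k ∈ Finset.range (n + 1), Polynomial.C (g.coeff k) * X ^ (n - k) * (X ^ 2 + 1) ^ k

/-- The Mahler measure of an `n × n` matrix: the Mahler measure of the associated
reciprocal polynomial of its characteristic polynomial. -/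
noncomputable def mahlerMat {n : ℕ} (A : Matrix (Fin n) (Fin n) ℂ) : ℝ :=
  mahlerMeasurePoly (assocRecip n A.charpoly)

/-- Lehmer's polynomial `z^10 + z^9 - z^7 - z^6 - z^5 - z^4 - z^3 + z + 1`. -/
noncomputable def lehmerPolyC : Polynomial ℂ :=
  X ^ 10 + X ^ 9 - X ^ 7 - X ^ 6 - X ^ 5 - X ^ 4 - X ^ 3 + X + 1

/-- Lehmer's number `λ₀ = 1.17628...`, the Mahler measure of Lehmer's polynomial. -/
noncomputable def lehmerNumber : ℝ := mahlerMeasurePoly lehmerPolyC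

/-- A Hermitian matrix is indecomposable if the graph on its index set with an edge
between `i ≠ j` whenever `A i j ≠ 0` is connected. -/
def Indecomposable {n : ℕ} (A : Matrix (Fin n) (Fin n) ℂ) : Prop :=
  (SimpleGraph.fromRel fun i j => A i j ≠ 0).Connected

/-- `A` is minimal noncyclotomic if it is indecomposable and noncyclotomic while every
proper principal submatrix of `A` is cyclotomic. -/
def MinimalNoncyclotomic {n : ℕ} (A : Matrix (Fin n) (Fin n) ℂ) : Prop :=
  Indecomposable A ∧ ¬ IsCycloMat A ∧
    ∀ (m : ℕ), m < n → ∀ e : Fin m ↪ Fin n, IsCycloMat (A.submatrix e e)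

/-- An `L'`-matrix over `O_{ℚ(√d)}`: a Hermitian matrix with entries in the ring of
integers, diagonal entries in `{0, 1, -1}`, and off-diagonal entries of norm at most 2. -/
def IsLpMat (d : ℤ) {n : ℕ} (A : Matrix (Fin n) (Fin n) ℂ) : Prop :=
  A.IsHermitian ∧ (∀ i j, InIntRing d (A i j)) ∧
    (∀ i, A i i ∈ ({0, 1, -1} : Set ℂ)) ∧
    ∀ i j, i ≠ j → Complex.normSq (A i j) ≤ 2

/-- An `L`-matrix over `O_{ℚ(√d)}`: a Hermitian matrix with entries in the ring of
integers, diagonal entries in `{0, 1, -1}`, and off-diagonal entries of norm at most 4. -/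
def IsLMat (d : ℤ) {n : ℕ} (A : Matrix (Fin n) (Fin n) ℂ) : Prop :=
  A.IsHermitian ∧ (∀ i j, InIntRing d (A i j)) ∧
    (∀ i, A i i ∈ ({0, 1, -1} : Set ℂ)) ∧
    ∀ i j, i ≠ j → Complex.normSq (A i j) ≤ 4

open Matrix

lemma eval_charpoly_det {n : ℕ} (M : Matrix (Fin n) (Fin n) ℂ) (μ : ℂ) :
    M.charpoly.eval μ = (Matrix.diagonal (fun _ => μ) - M).det := by
  unfold Matrix.charpoly
  rw [show (Polynomial.eval μ) (M.charmatrix.det) = (evalRingHom μ) (M.charmatrix.det) from rfl,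
    RingHom.map_det]
  congr 1
  ext i j
  by_cases h : i = j
  · subst h; simp [charmatrix_apply_eq]
  · simp [charmatrix_apply_ne _ _ _ h, Matrix.diagonal_apply_ne _ h]

lemma eigen_root {n : ℕ} {A : Matrix (Fin n) (Fin n) ℂ} (hA : A.IsHermitian) (k : Fin n) :
    A.charpoly.eval ((hA.eigenvalues k : ℝ) : ℂ) = 0 := by
  rw [eval_charpoly_det, ← Matrix.exists_mulVec_eq_zero_iff]
  refine ⟨⇑(hA.eigenvectorBasis k), fun h => hA.eigenvectorBasis.orthonormal.ne_zero k (by ext p; simpa using congrFun h p), ?_⟩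
  have h := hA.mulVec_eigenvectorBasis k
  rw [Matrix.sub_mulVec, h]
  funext p
  rw [Pi.sub_apply, Matrix.mulVec_diagonal, Pi.smul_apply]
  rw [Complex.real_smul]
  simp [sub_eq_zero]


lemma dot_conj_eq {n : ℕ} {A : Matrix (Fin n) (Fin n) ℂ} (hA : A.IsHermitian) (v : Fin n → ℂ) :
    dotProduct (star v) (A *ᵥ v)
      = dotProduct (star ((star (hA.eigenvectorUnitary : Matrix (Fin n) (Fin n) ℂ)) *ᵥ v))
        ((Matrix.diagonal (RCLike.ofReal ∘ hA.eigenvalues)) *ᵥ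
          ((star (hA.eigenvectorUnitary : Matrix (Fin n) (Fin n) ℂ)) *ᵥ v)) := by
  set U := (hA.eigenvectorUnitary : Matrix (Fin n) (Fin n) ℂ) with hU
  have hsp : A = U * Matrix.diagonal (RCLike.ofReal ∘ hA.eigenvalues) * star U := by
    have h := hA.spectral_theorem
    rw [Unitary.conjStarAlgAut_apply] at h
    exact h
  have h1 : (star U)ᴴ = U := by
    rw [Matrix.star_eq_conjTranspose, Matrix.conjTranspose_conjTranspose]
  conv_rhs => rw [Matrix.star_mulVec, h1, Matrix.mulVec_mulVec, ← Matrix.dotProduct_mulVec,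
    Matrix.mulVec_mulVec, ← Matrix.mul_assoc, ← hsp]

lemma dot_self_eq {n : ℕ} {A : Matrix (Fin n) (Fin n) ℂ} (hA : A.IsHermitian) (v : Fin n → ℂ) :
    dotProduct (star v) v
      = dotProduct (star ((star (hA.eigenvectorUnitary : Matrix (Fin n) (Fin n) ℂ)) *ᵥ v))
        ((star (hA.eigenvectorUnitary : Matrix (Fin n) (Fin n) ℂ)) *ᵥ v) := by
  set U := (hA.eigenvectorUnitary : Matrix (Fin n) (Fin n) ℂ) with hU
  have h1 : (star U)ᴴ = U := by
    rw [Matrix.star_eq_conjTranspose, Matrix.conjTranspose_conjTranspose]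
  have h2 : U * star U = 1 := (Matrix.mem_unitaryGroup_iff).mp hA.eigenvectorUnitary.2
  conv_rhs => rw [Matrix.star_mulVec, h1, Matrix.dotProduct_mulVec,
    Matrix.vecMul_vecMul, h2, Matrix.vecMul_one]


lemma re_dot_diag {n : ℕ} (μ : Fin n → ℝ) (w : Fin n → ℂ) :
    (dotProduct (star w) ((Matrix.diagonal (RCLike.ofReal ∘ μ)) *ᵥ w)).re
      = ∑ k, μ k * Complex.normSq (w k) := by
  rw [dotProduct, Complex.re_sum]
  congr 1; funext k
  rw [Matrix.mulVec_diagonal]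
  have : star w k * ((RCLike.ofReal ∘ μ) k * w k) = ((μ k * Complex.normSq (w k) : ℝ) : ℂ) := by
    show (starRingEnd ℂ) (w k) * ((μ k : ℂ) * w k) = _
    rw [mul_comm ((starRingEnd ℂ) (w k)), mul_assoc, Complex.mul_conj]
    push_cast; ring
  rw [this, Complex.ofReal_re]

lemma re_dot_self {n : ℕ} (w : Fin n → ℂ) :
    (dotProduct (star w) w).re = ∑ k, Complex.normSq (w k) := by
  rw [dotProduct, Complex.re_sum]
  congr 1; funext k
  rw [show star w k = (starRingEnd ℂ) (w k) from rfl, mul_comm, Complex.mul_conj, Complex.ofReal_re]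


lemma rayleigh_bounds {n : ℕ} (hn : 0 < n) {A : Matrix (Fin n) (Fin n) ℂ} (hA : A.IsHermitian) :
    ∃ μmax μmin : ℝ,
      A.charpoly.eval ((μmax : ℝ) : ℂ) = 0 ∧ A.charpoly.eval ((μmin : ℝ) : ℂ) = 0 ∧
      (∀ v : Fin n → ℂ, (dotProduct (star v) (A *ᵥ v)).re ≤ μmax * ∑ p, Complex.normSq (v p)) ∧
      (∀ v : Fin n → ℂ, μmin * ∑ p, Complex.normSq (v p) ≤ (dotProduct (star v) (A *ᵥ v)).re) := by
  classical
  haveI : Nonempty (Fin n) := ⟨⟨0, hn⟩⟩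
  obtain ⟨kmax, -, hkmax⟩ := Finset.exists_max_image Finset.univ hA.eigenvalues
    ⟨Classical.arbitrary _, Finset.mem_univ _⟩
  obtain ⟨kmin, -, hkmin⟩ := Finset.exists_min_image Finset.univ hA.eigenvalues
    ⟨Classical.arbitrary _, Finset.mem_univ _⟩
  refine ⟨hA.eigenvalues kmax, hA.eigenvalues kmin, eigen_root hA kmax, eigen_root hA kmin, ?_, ?_⟩
  all_goals {
    intro v
    set w : Fin n → ℂ := (star (hA.eigenvectorUnitary : Matrix (Fin n) (Fin n) ℂ)) *ᵥ v with hw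
    have h1 : (dotProduct (star v) (A *ᵥ v)).re = ∑ k, hA.eigenvalues k * Complex.normSq (w k) := by
      rw [dot_conj_eq hA v, ← hw, re_dot_diag]
    have h2 : ∑ p, Complex.normSq (v p) = ∑ k, Complex.normSq (w k) := by
      rw [← re_dot_self, ← re_dot_self, dot_self_eq hA v]
    rw [h1, h2, Finset.mul_sum]
    apply Finset.sum_le_sum
    intro k _
    first
      | exact mul_le_mul_of_nonneg_right (hkmax k (Finset.mem_univ k)) (Complex.normSq_nonneg _)
      | exact mul_le_mul_of_nonneg_right (hkmin k (Finset.mem_univ k)) (Complex.normSq_nonneg _)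
  }


lemma assocRecip_eval {n : ℕ} (g : Polynomial ℂ) (hg : g.natDegree ≤ n) {z : ℂ} (hz : z ≠ 0) :
    (assocRecip n g).eval z = z ^ n * g.eval (z + z⁻¹) := by
  unfold assocRecip
  rw [Polynomial.eval_finset_sum, Polynomial.eval_eq_sum_range' (Nat.lt_succ_of_le hg),
    Finset.mul_sum]
  apply Finset.sum_congr rfl
  intro k hk
  have hk' : k ≤ n := Nat.lt_succ_iff.mp (Finset.mem_range.mp hk)
  simp only [eval_mul, eval_pow, eval_add, eval_C, eval_X, eval_one]
  have h1 : z + z⁻¹ = (z ^ 2 + 1) / z := by field_simp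
  have h2 : z ^ n = z ^ (n - k) * z ^ k := by rw [← pow_add, Nat.sub_add_cancel hk']
  rw [h1, div_pow, h2]
  field_simp

lemma assocRecip_ne_zero {n : ℕ} (g : Polynomial ℂ) (hg : g.natDegree ≤ n) (hg0 : g ≠ 0) :
    assocRecip n g ≠ 0 := by
  intro h
  apply hg0
  apply Polynomial.eq_zero_of_infinite_isRoot
  apply Set.infinite_of_injective_forall_mem
    (f := fun m : ℕ => ((((m : ℝ) + 2) + ((m : ℝ) + 2)⁻¹ : ℝ) : ℂ))
  · intro m1 m2 hm
    simp only [Complex.ofReal_inj] at hm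
    have h1 : (0:ℝ) < (m1:ℝ) + 2 := by positivity
    have h2 : (0:ℝ) < (m2:ℝ) + 2 := by positivity
    have hinv1 : ((m1:ℝ)+2) * ((m1:ℝ)+2)⁻¹ = 1 := mul_inv_cancel₀ (ne_of_gt h1)
    have hinv2 : ((m2:ℝ)+2) * ((m2:ℝ)+2)⁻¹ = 1 := mul_inv_cancel₀ (ne_of_gt h2)
    have key : (((m1:ℝ)+2) - ((m2:ℝ)+2)) * (((m1:ℝ)+2)*((m2:ℝ)+2) - 1) = 0 := by
      linear_combination (((m1:ℝ)+2)*((m2:ℝ)+2)) * hm - ((m2:ℝ)+2) * hinv1 + ((m1:ℝ)+2) * hinv2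
    rcases mul_eq_zero.mp key with hk | hk
    · have : (m1:ℝ) = (m2:ℝ) := by linarith
      exact_mod_cast this
    · nlinarith
  · intro m
    have hz : (((m:ℝ) + 2 : ℝ) : ℂ) ≠ 0 := by
      simp only [ne_eq, Complex.ofReal_eq_zero]
      positivity
    have := assocRecip_eval g hg hz
    rw [h, Polynomial.eval_zero] at this
    have hpow : (((m:ℝ) + 2 : ℝ) : ℂ) ^ n ≠ 0 := pow_ne_zero _ hz
    have hroot : g.eval ((((m:ℝ)+2:ℝ):ℂ) + (((m:ℝ)+2:ℝ):ℂ)⁻¹) = 0 := by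
      rcases mul_eq_zero.mp this.symm with h' | h'
      · exact absurd h' hpow
      · exact h'
    simp only [Set.mem_setOf_eq, IsRoot]
    rw [show ((((m : ℝ) + 2) + ((m : ℝ) + 2)⁻¹ : ℝ) : ℂ)
        = (((m:ℝ)+2:ℝ):ℂ) + (((m:ℝ)+2:ℝ):ℂ)⁻¹ by push_cast; ring]
    exact hroot


lemma exists_root_up {n : ℕ} (g : Polynomial ℂ) (hg : g.natDegree ≤ n) (q μ : ℝ)
    (hq : 1 ≤ q) (hμ : q + q⁻¹ ≤ μ) (hroot : g.eval ((μ : ℝ) : ℂ) = 0) :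
    ∃ z : ℝ, q ≤ z ∧ (assocRecip n g).eval ((z : ℝ) : ℂ) = 0 := by
  have hq0 : (0:ℝ) < q := lt_of_lt_of_le one_pos hq
  have hqinv : q * q⁻¹ = 1 := mul_inv_cancel₀ (ne_of_gt hq0)
  have hqq : q ^ 2 + 1 ≤ μ * q := by nlinarith
  have hμ2 : 2 ≤ μ := by nlinarith [sq_nonneg (q - 1)]
  have hd0 : (0:ℝ) ≤ μ ^ 2 - 4 := by nlinarith
  set r := Real.sqrt (μ ^ 2 - 4) with hr
  have hr2 : r ^ 2 = μ ^ 2 - 4 := Real.sq_sqrt hd0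
  have hr0 : 0 ≤ r := Real.sqrt_nonneg _
  set z := (μ + r) / 2 with hzdef
  have hz1 : 1 ≤ z := by nlinarith
  have hz0 : z ≠ 0 := by nlinarith
  have hqz : q ≤ z := by
    rcases le_or_gt (2 * q) μ with h | h
    · nlinarith
    · nlinarith [sq_nonneg (r - (2 * q - μ))]
  have hmul : z * (μ - z) = 1 := by
    rw [hzdef]; linear_combination (-(1:ℝ)/4) * hr2
  have hinv : z⁻¹ = μ - z := by
    field_simp at hmul ⊢
    linarith [hmul]
  refine ⟨z, hqz, ?_⟩
  have hzc : ((z : ℝ) : ℂ) ≠ 0 := by exact_mod_cast hz0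
  rw [assocRecip_eval g hg hzc]
  have : ((z:ℝ):ℂ) + ((z:ℝ):ℂ)⁻¹ = ((μ:ℝ):ℂ) := by
    rw [← Complex.ofReal_inv, ← Complex.ofReal_add, hinv]
    norm_num
  rw [this, hroot, mul_zero]

lemma exists_root_down {n : ℕ} (g : Polynomial ℂ) (hg : g.natDegree ≤ n) (q μ : ℝ)
    (hq : 1 ≤ q) (hμ : μ ≤ -(q + q⁻¹)) (hroot : g.eval ((μ : ℝ) : ℂ) = 0) :
    ∃ z : ℝ, z ≤ -q ∧ (assocRecip n g).eval ((z : ℝ) : ℂ) = 0 := by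
  have hq0 : (0:ℝ) < q := lt_of_lt_of_le one_pos hq
  have hqinv : q * q⁻¹ = 1 := mul_inv_cancel₀ (ne_of_gt hq0)
  have hqq : μ * q ≤ -(q ^ 2 + 1) := by nlinarith
  have hμ2 : μ ≤ -2 := by nlinarith [sq_nonneg (q - 1)]
  have hd0 : (0:ℝ) ≤ μ ^ 2 - 4 := by nlinarith
  set r := Real.sqrt (μ ^ 2 - 4) with hr
  have hr2 : r ^ 2 = μ ^ 2 - 4 := Real.sq_sqrt hd0
  have hr0 : 0 ≤ r := Real.sqrt_nonneg _
  set z := (μ - r) / 2 with hzdef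
  have hz1 : z ≤ -1 := by nlinarith
  have hz0 : z ≠ 0 := by nlinarith
  have hqz : z ≤ -q := by
    rcases le_or_gt μ (-(2 * q)) with h | h
    · nlinarith
    · nlinarith [sq_nonneg (r - (μ + 2 * q))]
  have hmul : z * (μ - z) = 1 := by
    rw [hzdef]; linear_combination (-(1:ℝ)/4) * hr2
  have hinv : z⁻¹ = μ - z := by
    field_simp at hmul ⊢
    linarith [hmul]
  refine ⟨z, hqz, ?_⟩
  have hzc : ((z : ℝ) : ℂ) ≠ 0 := by exact_mod_cast hz0
  rw [assocRecip_eval g hg hzc]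
  have : ((z:ℝ):ℂ) + ((z:ℝ):ℂ)⁻¹ = ((μ:ℝ):ℂ) := by
    rw [← Complex.ofReal_inv, ← Complex.ofReal_add, hinv]
    norm_num
  rw [this, hroot, mul_zero]


lemma one_le_prodmax (T : Multiset ℂ) : 1 ≤ (T.map fun z => max 1 ‖z‖).prod := by
  apply Multiset.prod_induction
  · intro a b ha hb; nlinarith
  · exact le_rfl
  · intro x hx
    obtain ⟨z, _, rfl⟩ := Multiset.mem_map.mp hx
    exact le_max_left _ _

lemma mahler_lb1 (P : Polynomial ℂ) (hP : P ≠ 0) (z c : ℝ) (hc1 : 1 ≤ c) (hcz : c ≤ |z|)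
    (hz : P.eval ((z : ℝ) : ℂ) = 0) : c ≤ mahlerMeasurePoly P := by
  have hmem : ((z:ℝ):ℂ) ∈ P.roots := by
    rw [Polynomial.mem_roots hP]; exact hz
  obtain ⟨T, hT⟩ := Multiset.exists_cons_of_mem hmem
  unfold mahlerMeasurePoly
  rw [hT, Multiset.map_cons, Multiset.prod_cons]
  have h1 : c ≤ max 1 ‖((z:ℝ):ℂ)‖ := by
    rw [Complex.norm_real, Real.norm_eq_abs]; exact le_trans hcz (le_max_right _ _)
  have h2 := one_le_prodmax T
  nlinarith

lemma mahler_lb2 (P : Polynomial ℂ) (hP : P ≠ 0) (z₁ z₂ c₁ c₂ : ℝ) (hc1 : 1 ≤ c₁) (hc2 : 1 ≤ c₂)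
    (h1 : c₁ ≤ z₁) (h2 : z₂ ≤ -c₂)
    (hz1 : P.eval ((z₁ : ℝ) : ℂ) = 0) (hz2 : P.eval ((z₂ : ℝ) : ℂ) = 0) :
    c₁ * c₂ ≤ mahlerMeasurePoly P := by
  have hne : z₂ ≠ z₁ := by nlinarith
  have hmem1 : ((z₁:ℝ):ℂ) ∈ P.roots := by rw [Polynomial.mem_roots hP]; exact hz1
  obtain ⟨T, hT⟩ := Multiset.exists_cons_of_mem hmem1
  have hmem2 : ((z₂:ℝ):ℂ) ∈ T := by
    have : ((z₂:ℝ):ℂ) ∈ P.roots := by rw [Polynomial.mem_roots hP]; exact hz2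
    rw [hT, Multiset.mem_cons] at this
    rcases this with h | h
    · exact absurd (Complex.ofReal_inj.mp h) hne
    · exact h
  obtain ⟨T₂, hT₂⟩ := Multiset.exists_cons_of_mem hmem2
  unfold mahlerMeasurePoly
  rw [hT, hT₂, Multiset.map_cons, Multiset.prod_cons, Multiset.map_cons, Multiset.prod_cons]
  have g1 : c₁ ≤ max 1 ‖((z₁:ℝ):ℂ)‖ := by
    rw [Complex.norm_real, Real.norm_eq_abs]
    refine le_trans ?_ (le_max_right _ _)
    rw [abs_of_pos (by linarith)]; exact h1
  have g2 : c₂ ≤ max 1 ‖((z₂:ℝ):ℂ)‖ := by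
    rw [Complex.norm_real, Real.norm_eq_abs]
    refine le_trans ?_ (le_max_right _ _)
    rw [abs_of_neg (by linarith)]; linarith
  have g3 := one_le_prodmax T₂
  have m1 : (1:ℝ) ≤ max 1 ‖((z₁:ℝ):ℂ)‖ := le_max_left _ _
  have m2 : (1:ℝ) ≤ max 1 ‖((z₂:ℝ):ℂ)‖ := le_max_left _ _
  calc c₁ * c₂ ≤ max 1 ‖((z₁:ℝ):ℂ)‖ * max 1 ‖((z₂:ℝ):ℂ)‖ :=
        mul_le_mul g1 g2 (by linarith) (by linarith)
    _ ≤ max 1 ‖((z₁:ℝ):ℂ)‖ * (max 1 ‖((z₂:ℝ):ℂ)‖ *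
          (Multiset.map (fun z => 1 ⊔ ‖z‖) T₂).prod) := by
        rw [← mul_assoc]
        exact le_mul_of_one_le_right (by positivity) g3


lemma quadOmega_im_pos (d : ℤ) (hd : d < 0) : 0 < (quadOmega d).im := by
  have h0 : (0:ℝ) < Real.sqrt (-d) := by
    apply Real.sqrt_pos.mpr
    have : (0:ℤ) < -d := by omega
    exact_mod_cast this
  unfold quadOmega
  split_ifs <;> simp [Complex.div_im, Complex.add_im, Complex.mul_im] <;> linarith

lemma real_int_of_mem (d : ℤ) (hd : d < 0) {x : ℂ} (hx : InIntRing d x) (him : x.im = 0) :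
    ∃ a : ℤ, x = (a : ℂ) := by
  obtain ⟨a, b, rfl⟩ := hx
  have h1 : ((a:ℂ) + (b:ℂ) * quadOmega d).im = (b:ℝ) * (quadOmega d).im := by
    simp [Complex.add_im, Complex.mul_im]
  rw [h1] at him
  have hb : (b:ℝ) = 0 := by
    rcases mul_eq_zero.mp him with h | h
    · exact h
    · exact absurd h (ne_of_gt (quadOmega_im_pos d hd))
  have hb0 : b = 0 := by exact_mod_cast hb
  exact ⟨a, by rw [hb0]; simp⟩


lemma quadform {n : ℕ} {A : Matrix (Fin n) (Fin n) ℂ} (hA : A.IsHermitian)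
    {i j : Fin n} (hij : i ≠ j) (ai aj : ℤ) (hai : A i i = (ai : ℂ)) (haj : A j j = (aj : ℂ))
    (N : ℝ) (hNdef : N = Complex.normSq (A i j)) (q : ℝ) (v : Fin n → ℂ)
    (hvdef : v = fun p =>
      if p = i then ((N : ℝ) : ℂ) else if p = j then (q : ℂ) * (starRingEnd ℂ) (A i j) else 0) :
    (dotProduct (star v) (A *ᵥ v)).re
        = (ai : ℝ) * N ^ 2 + (aj : ℝ) * q ^ 2 * N + 2 * q * N ^ 2 ∧
      ∑ p, Complex.normSq (v p) = N ^ 2 + q ^ 2 * N := by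
  have hAji : A j i = (starRingEnd ℂ) (A i j) := by
    have := congrFun (congrFun hA j) i
    rw [Matrix.conjTranspose_apply] at this
    exact this.symm
  have hv0 : ∀ p, p ≠ i → p ≠ j → v p = 0 := by
    intro p h1 h2; simp only [hvdef, if_neg h1, if_neg h2]
  have hvi : v i = ((N : ℝ) : ℂ) := by simp only [hvdef, if_pos rfl]
  have hvj : v j = (q : ℂ) * (starRingEnd ℂ) (A i j) := by
    simp only [hvdef]
    rw [if_neg (Ne.symm hij)]
    simp
  have hpairC : ∀ f : Fin n → ℂ, (∀ p, p ≠ i → p ≠ j → f p = 0) → ∑ p, f p = f i + f j := by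
    intro f hf
    rw [← Finset.sum_subset (Finset.subset_univ ({i, j} : Finset (Fin n)))]
    · rw [Finset.sum_pair hij]
    · intro r _ hr
      simp only [Finset.mem_insert, Finset.mem_singleton, not_or] at hr
      exact hf r hr.1 hr.2
  have hpairR : ∀ f : Fin n → ℝ, (∀ p, p ≠ i → p ≠ j → f p = 0) → ∑ p, f p = f i + f j := by
    intro f hf
    rw [← Finset.sum_subset (Finset.subset_univ ({i, j} : Finset (Fin n)))]
    · rw [Finset.sum_pair hij]
    · intro r _ hr
      simp only [Finset.mem_insert, Finset.mem_singleton, not_or] at hr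
      exact hf r hr.1 hr.2
  have hmv : ∀ p, (A *ᵥ v) p = A p i * v i + A p j * v j := by
    intro p
    show dotProduct (A p) v = _
    rw [dotProduct]
    exact hpairC (fun r => A p r * v r) (fun r h1 h2 => by
      show A p r * v r = 0
      rw [hv0 r h1 h2, mul_zero])
  have hXc : A i j * (starRingEnd ℂ) (A i j) = ((N : ℝ) : ℂ) := by rw [hNdef]; exact Complex.mul_conj _
  constructor
  · have hdot : dotProduct (star v) (A *ᵥ v)
        = (starRingEnd ℂ) (v i) * (A *ᵥ v) i + (starRingEnd ℂ) (v j) * (A *ᵥ v) j := by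
      rw [dotProduct]
      exact hpairC (fun p => star (v p) * (A *ᵥ v) p) (fun p h1 h2 => by
        show star (v p) * (A *ᵥ v) p = 0
        rw [hv0 p h1 h2, star_zero, zero_mul])
    rw [hdot, hmv i, hmv j, hvi, hvj, hai, haj, hAji]
    have : (starRingEnd ℂ) (((N:ℝ):ℂ)) * ((ai:ℂ) * ((N:ℝ):ℂ) + A i j * ((q:ℂ) * (starRingEnd ℂ) (A i j)))
        + (starRingEnd ℂ) ((q:ℂ) * (starRingEnd ℂ) (A i j)) *
            ((starRingEnd ℂ) (A i j) * ((N:ℝ):ℂ) + (aj:ℂ) * ((q:ℂ) * (starRingEnd ℂ) (A i j)))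
        = (((ai : ℝ) * N ^ 2 + (aj : ℝ) * q ^ 2 * N + 2 * q * N ^ 2 : ℝ) : ℂ) := by
      simp only [_root_.map_mul, Complex.conj_conj, Complex.conj_ofReal]
      push_cast
      linear_combination (2 * (q:ℂ) * ((N:ℝ):ℂ) + (aj:ℂ) * (q:ℂ)^2) * hXc
    rw [this, Complex.ofReal_re]
  · rw [hpairR (fun p => Complex.normSq (v p)) (fun p h1 h2 => by
      show Complex.normSq (v p) = 0
      rw [hv0 p h1 h2]; simp)]
    show Complex.normSq (v i) + Complex.normSq (v j) = _
    rw [hvi, hvj, Complex.normSq_mul, Complex.normSq_conj, Complex.normSq_ofReal, ← hNdef,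
      Complex.normSq_ofReal]
    ring


lemma key_id (ai aj N Δ lam : ℝ) (h : (2*lam - (ai+aj))^2 = Δ^2)
    (hΔ2 : Δ^2 = (ai-aj)^2 + 4*N) :
    ai*N^2 + aj*(lam-ai)^2*N + 2*(lam-ai)*N^2 = lam*(N^2 + (lam-ai)^2*N) := by
  linear_combination (-(N*(lam-ai))/4) * (h.trans hΔ2)

set_option maxHeartbeats 1000000 in
/-- An `R`-matrix with an off-diagonal entry of norm at least 5 has Mahler measure
greater than 1.3; indeed at least 2.36. -/
theorem large_offdiagonal_entry_mahler_bound
    (d : ℤ) (hd : d < 0) (hsf : Squarefree d) (hd1 : d ≠ -1) (hd3 : d ≠ -3)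
    (n : ℕ) (A : Matrix (Fin n) (Fin n) ℂ) (hA : A.IsHermitian)
    (hent : ∀ i j, InIntRing d (A i j))
    (i j : Fin n) (hij : i ≠ j) (h5 : 5 ≤ Complex.normSq (A i j)) :
    1.3 < mahlerMat A ∧ 2.36 ≤ mahlerMat A := by
  have hn : 0 < n := i.pos
  -- diagonal entries are integers
  have hdiag : ∀ k : Fin n, ∃ a : ℤ, A k k = (a : ℂ) := by
    intro k
    apply real_int_of_mem d hd (hent k k)
    have h := congrFun (congrFun hA k) k
    rw [Matrix.conjTranspose_apply] at h
    have h2 : ((starRingEnd ℂ) (A k k)).im = (A k k).im := congrArg Complex.im h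
    rw [Complex.conj_im] at h2
    linarith
  obtain ⟨ai, hai⟩ := hdiag i
  obtain ⟨aj, haj⟩ := hdiag j
  set N : ℝ := Complex.normSq (A i j) with hNdef
  have hN5 : (5:ℝ) ≤ N := h5
  have hNpos : (0:ℝ) < N := by linarith
  -- Rayleigh bounds
  obtain ⟨μmax, μmin, hrmax, hrmin, hup, hlow⟩ := rayleigh_bounds hn hA
  -- the 2x2 block eigenvalue bounds
  set Δ : ℝ := Real.sqrt (((ai:ℝ) - (aj:ℝ))^2 + 4*N) with hΔdef
  have hΔ2 : Δ^2 = ((ai:ℝ) - (aj:ℝ))^2 + 4*N := Real.sq_sqrt (by positivity)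
  have hΔ0 : 0 ≤ Δ := Real.sqrt_nonneg _
  have hboundlam : ∀ lam : ℝ, (2*lam - ((ai:ℝ)+(aj:ℝ)))^2 = Δ^2 → μmin ≤ lam ∧ lam ≤ μmax := by
    intro lam hlam
    set q : ℝ := lam - (ai:ℝ) with hqdef
    set v : Fin n → ℂ := fun p =>
      if p = i then ((N : ℝ) : ℂ) else if p = j then (q : ℂ) * (starRingEnd ℂ) (A i j) else 0
      with hvdef
    obtain ⟨hre, hsum⟩ := quadform hA hij ai aj hai haj N hNdef q v hvdef
    have hkey : (ai:ℝ)*N^2 + (aj:ℝ)*q^2*N + 2*q*N^2 = lam*(N^2 + q^2*N) := by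
      have := key_id (ai:ℝ) (aj:ℝ) N Δ lam hlam hΔ2
      rw [hqdef]; exact this
    have hdenom : 0 < N^2 + q^2*N := by positivity
    constructor
    · have h1 := hlow v
      rw [hre, hsum, hkey] at h1
      exact le_of_mul_le_mul_right (by linarith) hdenom
    · have h1 := hup v
      rw [hre, hsum, hkey] at h1
      exact le_of_mul_le_mul_right (by linarith) hdenom
  have hlamp : ((ai:ℝ)+(aj:ℝ) + Δ)/2 ≤ μmax :=
    (hboundlam _ (by ring)).2
  have hlamm : μmin ≤ ((ai:ℝ)+(aj:ℝ) - Δ)/2 :=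
    (hboundlam _ (by ring)).1
  -- the reciprocal polynomial
  set P : Polynomial ℂ := assocRecip n A.charpoly with hPdef
  have hdeg : A.charpoly.natDegree ≤ n := by
    rw [Matrix.charpoly_natDegree_eq_dim, Fintype.card_fin]
  have hP0 : P ≠ 0 := assocRecip_ne_zero _ hdeg (Matrix.charpoly_monic A).ne_zero
  have hmm : mahlerMat A = mahlerMeasurePoly P := rfl
  -- main bound
  have hmain : (2.36:ℝ) ≤ mahlerMeasurePoly P := by
    rcases le_or_gt 2 (ai + aj) with hs | hs'
    · -- s ≥ 2 : μmax ≥ (2 + Δ)/2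
      have hsR : (2:ℝ) ≤ (ai:ℝ) + (aj:ℝ) := by exact_mod_cast hs
      have hΔb : (4.47:ℝ) ≤ Δ := by nlinarith [sq_nonneg ((ai:ℝ) - (aj:ℝ))]
      have hq : (2.36:ℝ) + (2.36:ℝ)⁻¹ ≤ μmax := by
        have : (2.36:ℝ) + (2.36:ℝ)⁻¹ ≤ ((ai:ℝ)+(aj:ℝ) + Δ)/2 := by norm_num; linarith
        linarith
      obtain ⟨z, hz1, hz2⟩ := exists_root_up A.charpoly hdeg 2.36 μmax (by norm_num) hq hrmax
      exact mahler_lb1 P hP0 z 2.36 (by norm_num)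
        (by rw [abs_of_pos (by linarith)]; exact hz1) hz2
    rcases le_or_gt (ai + aj) (-2) with hs | hs''
    · -- s ≤ -2
      have hsR : (ai:ℝ) + (aj:ℝ) ≤ -2 := by exact_mod_cast hs
      have hΔb : (4.47:ℝ) ≤ Δ := by nlinarith [sq_nonneg ((ai:ℝ) - (aj:ℝ))]
      have hq : μmin ≤ -((2.36:ℝ) + (2.36:ℝ)⁻¹) := by
        have : ((ai:ℝ)+(aj:ℝ) - Δ)/2 ≤ -((2.36:ℝ) + (2.36:ℝ)⁻¹) := by norm_num; linarith
        linarith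
      obtain ⟨z, hz1, hz2⟩ := exists_root_down A.charpoly hdeg 2.36 μmin (by norm_num) hq hrmin
      exact mahler_lb1 P hP0 z 2.36 (by norm_num)
        (by rw [abs_of_neg (by linarith)]; linarith) hz2
    -- now -1 ≤ ai + aj ≤ 1
    rcases (by omega : ai + aj = 0 ∨ ai + aj = 1 ∨ ai + aj = -1) with hs | hs | hs
    · -- s = 0 : two roots
      have hsR : (ai:ℝ) + (aj:ℝ) = 0 := by exact_mod_cast congrArg (Int.cast : ℤ → ℝ) hs
      have hΔb : (4.47:ℝ) ≤ Δ := by nlinarith [sq_nonneg ((ai:ℝ) - (aj:ℝ))]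
      have hqup : (1.61:ℝ) + (1.61:ℝ)⁻¹ ≤ μmax := by
        have : (1.61:ℝ) + (1.61:ℝ)⁻¹ ≤ ((ai:ℝ)+(aj:ℝ) + Δ)/2 := by rw [hsR]; norm_num; linarith
        linarith
      have hqdown : μmin ≤ -((1.61:ℝ) + (1.61:ℝ)⁻¹) := by
        have : ((ai:ℝ)+(aj:ℝ) - Δ)/2 ≤ -((1.61:ℝ) + (1.61:ℝ)⁻¹) := by rw [hsR]; norm_num; linarith
        linarith
      obtain ⟨z1, hz11, hz12⟩ := exists_root_up A.charpoly hdeg 1.61 μmax (by norm_num) hqup hrmax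
      obtain ⟨z2, hz21, hz22⟩ := exists_root_down A.charpoly hdeg 1.61 μmin (by norm_num) hqdown hrmin
      have := mahler_lb2 P hP0 z1 z2 1.61 1.61 (by norm_num) (by norm_num) hz11 hz21 hz12 hz22
      linarith [this]
    · -- s = 1 : t odd so Δ² ≥ 21
      have hsR : (ai:ℝ) + (aj:ℝ) = 1 := by exact_mod_cast congrArg (Int.cast : ℤ → ℝ) hs
      have htne : ai - aj ≠ 0 := by omega
      have ht1 : (1:ℝ) ≤ ((ai:ℝ) - (aj:ℝ))^2 := by
        have h1 : (1:ℤ) ≤ |ai - aj| := Int.one_le_abs htne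
        have h2 : (1:ℝ) ≤ |(ai:ℝ) - (aj:ℝ)| := by
          rw [show (ai:ℝ) - (aj:ℝ) = ((ai - aj : ℤ) : ℝ) by push_cast; ring]
          rw [← Int.cast_abs]
          exact_mod_cast h1
        nlinarith [abs_nonneg ((ai:ℝ) - (aj:ℝ)), sq_abs ((ai:ℝ) - (aj:ℝ))]
      have hΔb : (4.568:ℝ) ≤ Δ := by nlinarith
      have hq : (2.36:ℝ) + (2.36:ℝ)⁻¹ ≤ μmax := by
        have : (2.36:ℝ) + (2.36:ℝ)⁻¹ ≤ ((ai:ℝ)+(aj:ℝ) + Δ)/2 := by rw [hsR]; norm_num; linarith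
        linarith
      obtain ⟨z, hz1, hz2⟩ := exists_root_up A.charpoly hdeg 2.36 μmax (by norm_num) hq hrmax
      exact mahler_lb1 P hP0 z 2.36 (by norm_num)
        (by rw [abs_of_pos (by linarith)]; exact hz1) hz2
    · -- s = -1
      have hsR : (ai:ℝ) + (aj:ℝ) = -1 := by exact_mod_cast congrArg (Int.cast : ℤ → ℝ) hs
      have htne : ai - aj ≠ 0 := by omega
      have ht1 : (1:ℝ) ≤ ((ai:ℝ) - (aj:ℝ))^2 := by
        have h1 : (1:ℤ) ≤ |ai - aj| := Int.one_le_abs htne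
        have h2 : (1:ℝ) ≤ |(ai:ℝ) - (aj:ℝ)| := by
          rw [show (ai:ℝ) - (aj:ℝ) = ((ai - aj : ℤ) : ℝ) by push_cast; ring]
          rw [← Int.cast_abs]
          exact_mod_cast h1
        nlinarith [abs_nonneg ((ai:ℝ) - (aj:ℝ)), sq_abs ((ai:ℝ) - (aj:ℝ))]
      have hΔb : (4.568:ℝ) ≤ Δ := by nlinarith
      have hq : μmin ≤ -((2.36:ℝ) + (2.36:ℝ)⁻¹) := by
        have : ((ai:ℝ)+(aj:ℝ) - Δ)/2 ≤ -((2.36:ℝ) + (2.36:ℝ)⁻¹) := by rw [hsR]; norm_num; linarith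
        linarith
      obtain ⟨z, hz1, hz2⟩ := exists_root_down A.charpoly hdeg 2.36 μmin (by norm_num) hq hrmin
      exact mahler_lb1 P hP0 z 2.36 (by norm_num)
        (by rw [abs_of_neg (by linarith)]; linarith) hz2
  rw [hmm]
  exact ⟨lt_of_lt_of_le (by norm_num) hmain, hmain⟩
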